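/- arXiv:2209.00211 — 2 statements merged into one kernel-verified Lean document; each statement's English description precedes it below -/
import Mathlib

section
/- Let 0 < α < 1, C > 0, τ > 0, and let n ≥ 2 be an integer with t_{n−1} = (n−1)τ, t_n = nτ. Let f : ℝ → ℝ be twice continuously differentiable on [t_{n−1}, t_n] with |f''(t)| ≤ C·t^{α−1} for all t ∈ [t_{n−1}, t_n]. Then |(1/τ)·∫_{t_{n−1}}^{t_n} [ f(t) − ( ((t_n−t)/τ)·f(t_{n−1}) + ((t−t_{n−1})/τ)·f(t_n) ) ] dt| ≤ (2C/α)·τ·(t_n^α − t_{n−1}^α). -/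
open MeasureTheory

set_option maxHeartbeats 1000000

/-- The estimate (2.16): averaged truncation error of the two-point linear
interpolant on [t_{n−1}, t_n] under the weighted regularity assumption. -/
theorem averaged_interpolant_error
    (α C τ : ℝ) (hα0 : 0 < α) (hα1 : α < 1) (hC : 0 < C) (hτ : 0 < τ)
    (n : ℕ) (hn : 2 ≤ n)
    (f f' f'' : ℝ → ℝ)
    (hf : ∀ t ∈ Set.Icc (((n : ℝ) - 1) * τ) ((n : ℝ) * τ),
      HasDerivWithinAt f (f' t) (Set.Icc (((n : ℝ) - 1) * τ) ((n : ℝ) * τ)) t)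
    (hf' : ∀ t ∈ Set.Icc (((n : ℝ) - 1) * τ) ((n : ℝ) * τ),
      HasDerivWithinAt f' (f'' t) (Set.Icc (((n : ℝ) - 1) * τ) ((n : ℝ) * τ)) t)
    (hcont : ContinuousOn f'' (Set.Icc (((n : ℝ) - 1) * τ) ((n : ℝ) * τ)))
    (hbound : ∀ t ∈ Set.Icc (((n : ℝ) - 1) * τ) ((n : ℝ) * τ), |f'' t| ≤ C * t ^ (α - 1)) :
    |(1 / τ) * ∫ t in (((n : ℝ) - 1) * τ)..((n : ℝ) * τ),
        (f t - ((((n : ℝ) * τ - t) / τ) * f (((n : ℝ) - 1) * τ)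
          + ((t - ((n : ℝ) - 1) * τ) / τ) * f ((n : ℝ) * τ)))|
      ≤ (2 * C / α) * τ * (((n : ℝ) * τ) ^ α - (((n : ℝ) - 1) * τ) ^ α) := by
  set a : ℝ := ((n : ℝ) - 1) * τ with ha_def
  set b : ℝ := (n : ℝ) * τ with hb_def
  have hn2 : (2 : ℝ) ≤ (n : ℝ) := by exact_mod_cast hn
  have ha0 : 0 < a := by
    have : (1 : ℝ) ≤ (n : ℝ) - 1 := by linarith
    positivity
  have hb0 : 0 < b := lt_trans ha0 (by simp only [ha_def, hb_def]; nlinarith)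
  have hab : a < b := by simp only [ha_def, hb_def]; nlinarith
  have hba : b - a = τ := by simp only [ha_def, hb_def]; ring
  have hb2a : b ≤ 2 * a := by simp only [ha_def, hb_def]; nlinarith
  clear_value a b
  clear ha_def hb_def
  set M : ℝ := C * a ^ (α - 1) with hM_def
  have hM0 : 0 < M := by positivity
  have hIcc : Convex ℝ (Set.Icc a b) := convex_Icc a b
  -- bound |f''| ≤ M on [a,b]
  have hbM : ∀ t ∈ Set.Icc a b, |f'' t| ≤ M := by
    intro t ht
    refine (hbound t ht).trans ?_
    have : t ^ (α - 1) ≤ a ^ (α - 1) :=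
      Real.rpow_le_rpow_of_nonpos ha0 ht.1 (by linarith)
    exact mul_le_mul_of_nonneg_left this hC.le
  -- M ≤ 2 C b^(α-1)
  have hbpow : (0:ℝ) ≤ b ^ (α - 1) := Real.rpow_nonneg hb0.le _
  have hM2 : M ≤ 2 * C * b ^ (α - 1) := by
    have h1 : a ^ (α - 1) ≤ (b / 2) ^ (α - 1) :=
      Real.rpow_le_rpow_of_nonpos (by positivity) (by linarith) (by linarith)
    have h2 : (b / 2 : ℝ) ^ (α - 1) = b ^ (α - 1) * (2:ℝ) ^ (1 - α) := by
      rw [Real.div_rpow hb0.le (by norm_num), div_eq_mul_inv,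
        ← Real.rpow_neg (by norm_num : (0:ℝ) ≤ 2), neg_sub]
    have h3 : (2:ℝ) ^ (1 - α) ≤ 2 := by
      calc (2:ℝ) ^ (1 - α) ≤ (2:ℝ) ^ (1:ℝ) :=
            Real.rpow_le_rpow_of_exponent_le one_le_two (by linarith)
        _ = 2 := Real.rpow_one 2
    have h4 : a ^ (α - 1) ≤ b ^ (α - 1) * 2 := by
      refine (h1.trans_eq h2).trans ?_
      exact mul_le_mul_of_nonneg_left h3 hbpow
    calc M = C * a ^ (α - 1) := hM_def
      _ ≤ C * (b ^ (α - 1) * 2) := mul_le_mul_of_nonneg_left h4 hC.le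
      _ = 2 * C * b ^ (α - 1) := by ring
  clear_value M
  -- step A : |f' t - f' a| ≤ M * τ on [a,b]
  have haI : a ∈ Set.Icc a b := Set.left_mem_Icc.2 hab.le
  have hbI : b ∈ Set.Icc a b := Set.right_mem_Icc.2 hab.le
  have stepA : ∀ t ∈ Set.Icc a b, |f' t - f' a| ≤ M * τ := by
    intro t ht
    have h := hIcc.norm_image_sub_le_of_norm_hasDerivWithin_le hf' hbM haI ht
    rw [Real.norm_eq_abs, Real.norm_eq_abs] at h
    refine h.trans ?_
    have : |t - a| ≤ τ := by
      rw [abs_of_nonneg (by linarith [ht.1])]; linarith [ht.2]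
    nlinarith
  -- g t = f t - f a - f' a * (t - a)
  set g : ℝ → ℝ := fun t => f t - f a - f' a * (t - a) with hg_def
  have hg : ∀ t ∈ Set.Icc a b,
      HasDerivWithinAt g (f' t - f' a) (Set.Icc a b) t := by
    intro t ht
    have h1 := (hf t ht).sub (hasDerivWithinAt_const t _ (f a))
    have h2 : HasDerivWithinAt (fun t => f' a * (t - a)) (f' a) (Set.Icc a b) t := by
      simpa using ((hasDerivWithinAt_id t _).sub
        (hasDerivWithinAt_const t _ a)).const_mul (f' a)
    have h3 := h1.sub h2
    rw [sub_zero] at h3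
    exact h3
  have stepB : ∀ t ∈ Set.Icc a b, |g t| ≤ M * τ * (t - a) := by
    intro t ht
    have h := hIcc.norm_image_sub_le_of_norm_hasDerivWithin_le hg
      (fun x hx => by rw [Real.norm_eq_abs]; exact stepA x hx) haI ht
    have hga : g a = 0 := by simp [hg_def]
    rw [hga, sub_zero, Real.norm_eq_abs, Real.norm_eq_abs,
      abs_of_nonneg (by linarith [ht.1] : (0:ℝ) ≤ t - a)] at h
    exact h
  have hgb_val : g b = f b - f a - f' a * τ := by rw [hg_def]; simp [hba]
  clear_value g
  -- pointwise bound on the error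
  have err_bound : ∀ t ∈ Set.Icc a b,
      |f t - (((b - t) / τ) * f a + ((t - a) / τ) * f b)| ≤ 2 * M * τ * (t - a) := by
    intro t ht
    have hta : 0 ≤ t - a := by linarith [ht.1]
    have h1 := stepB t ht
    have key : f t - (((b - t) / τ) * f a + ((t - a) / τ) * f b)
        = g t - ((t - a) / τ) * g b := by
      rw [hgb_val]
      have hgt : g t = f t - f a - f' a * (t - a) := by rw [hg_def]
      rw [hgt]
      have hbt : b - t = τ - (t - a) := by rw [← hba]; ring
      rw [hbt]
      field_simp
      ring
    rw [key]
    have h3 : |((t - a) / τ) * g b| ≤ ((t - a) / τ) * (M * τ * τ) := by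
      rw [abs_mul, abs_of_nonneg (by positivity)]
      have hgb : |g b| ≤ M * τ * τ := by
        have := stepB b hbI; rw [hba] at this; exact this
      exact mul_le_mul_of_nonneg_left hgb (by positivity)
    calc |g t - ((t - a) / τ) * g b| ≤ |g t| + |((t - a) / τ) * g b| := abs_sub _ _
      _ ≤ M * τ * (t - a) + ((t - a) / τ) * (M * τ * τ) := add_le_add h1 h3
      _ = 2 * M * τ * (t - a) := by field_simp; ring
  -- continuity of the integrand
  have hfc : ContinuousOn f (Set.Icc a b) := fun t ht =>
    (hf t ht).continuousWithinAt
  have herrc : ContinuousOn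
      (fun t => f t - (((b - t) / τ) * f a + ((t - a) / τ) * f b)) (Set.Icc a b) := by
    apply hfc.sub
    apply ContinuousOn.add <;> apply ContinuousOn.mul <;> fun_prop
  have hInt : IntervalIntegrable
      (fun t => f t - (((b - t) / τ) * f a + ((t - a) / τ) * f b)) volume a b := by
    apply ContinuousOn.intervalIntegrable
    rwa [Set.uIcc_of_le hab.le]
  -- bound the integral
  have habs : |∫ t in a..b, (f t - (((b - t) / τ) * f a + ((t - a) / τ) * f b))|
      ≤ ∫ t in a..b, |f t - (((b - t) / τ) * f a + ((t - a) / τ) * f b)| :=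
    intervalIntegral.abs_integral_le_integral_abs hab.le
  have hIntId : IntervalIntegrable (fun t : ℝ => t - a) volume a b :=
    (continuous_id.sub continuous_const).intervalIntegrable a b
  have hmono : (∫ t in a..b, |f t - (((b - t) / τ) * f a + ((t - a) / τ) * f b)|)
      ≤ ∫ t in a..b, 2 * M * τ * (t - a) := by
    apply intervalIntegral.integral_mono_on hab.le hInt.abs
    · exact hIntId.const_mul _
    · exact err_bound
  have hcalc : (∫ t in a..b, 2 * M * τ * (t - a)) = M * τ * τ * τ := by
    have hsplit : (∫ t in a..b, 2 * M * τ * (t - a))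
        = 2 * M * τ * ∫ t in a..b, (t - a) := by
      rw [← intervalIntegral.integral_const_mul]
    have hid : (∫ t in a..b, (t - a)) = (b - a) ^ 2 / 2 := by
      rw [intervalIntegral.integral_comp_sub_right (fun x => x) a]
      simp [integral_id]
    rw [hsplit, hid, ← hba]
    ring
  -- b^α - a^α ≥ α * τ * b^(α-1)
  have hMVT : α * τ * b ^ (α - 1) ≤ b ^ α - a ^ α := by
    have hcontOn : ContinuousOn (fun x : ℝ => x ^ α) (Set.Icc a b) := by
      apply ContinuousOn.rpow_const continuousOn_id
      intro x hx; exact Or.inl (ne_of_gt (lt_of_lt_of_le ha0 hx.1))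
    have hderiv : ∀ x ∈ Set.Ioo a b,
        HasDerivAt (fun x : ℝ => x ^ α) (α * x ^ (α - 1)) x := by
      intro x hx
      exact Real.hasDerivAt_rpow_const (Or.inl (ne_of_gt (lt_trans ha0 hx.1)))
    obtain ⟨c, hc, hslope⟩ := exists_hasDerivAt_eq_slope (fun x : ℝ => x ^ α)
      (fun x => α * x ^ (α - 1)) hab hcontOn hderiv
    have hcb : b ^ (α - 1) ≤ c ^ (α - 1) :=
      Real.rpow_le_rpow_of_nonpos (lt_trans ha0 hc.1) hc.2.le (by linarith)
    have hslope' : α * c ^ (α - 1) * (b - a) = b ^ α - a ^ α := by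
      have hne : b - a ≠ 0 := by linarith
      field_simp at hslope
      linarith [hslope]
    rw [← hslope', hba]
    nlinarith [mul_nonneg (mul_nonneg hα0.le hτ.le) (sub_nonneg.2 hcb)]
  -- put it all together
  have hfinal : |(1 / τ) * ∫ t in a..b,
      (f t - (((b - t) / τ) * f a + ((t - a) / τ) * f b))| ≤ M * τ * τ := by
    rw [abs_mul, abs_of_nonneg (by positivity : (0:ℝ) ≤ 1 / τ)]
    calc (1 / τ) * |∫ t in a..b, (f t - (((b - t) / τ) * f a + ((t - a) / τ) * f b))|
        ≤ (1 / τ) * (M * τ * τ * τ) := by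
          apply mul_le_mul_of_nonneg_left _ (by positivity)
          exact (habs.trans hmono).trans_eq hcalc
      _ = M * τ * τ := by field_simp
  refine hfinal.trans ?_
  have hstep : 2 * C * b ^ (α - 1) * τ * τ ≤ (2 * C / α) * τ * (b ^ α - a ^ α) := by
    have h := mul_le_mul_of_nonneg_left hMVT
      (by positivity : (0:ℝ) ≤ (2 * C / α) * τ)
    calc 2 * C * b ^ (α - 1) * τ * τ = (2 * C / α) * τ * (α * τ * b ^ (α - 1)) := by
          field_simp
      _ ≤ (2 * C / α) * τ * (b ^ α - a ^ α) := h
  refine le_trans ?_ hstep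
  nlinarith [hM2, mul_le_mul_of_nonneg_right hM2 (by positivity : (0:ℝ) ≤ τ * τ)]
end

section
/- Let 0 < α < 1, T > 0, C > 0, and let f : ℝ → ℝ be continuously differentiable on [0, T] and twice continuously differentiable on (0, T] with |f''(t)| ≤ C·t^{α−1} for all t ∈ (0, T]. For a positive integer 𝒩 set τ = T/𝒩 and t_m = mτ, and define (R1)¹ = (1/τ)∫_0^{t_1}(f(t) − f(t_1)) dt and, for m ≥ 2, (R1)^m = (1/τ)∫_{t_{m−1}}^{t_m}[ f(t) − ( ((t_m−t)/τ)f(t_{m−1}) + ((t−t_{m−1})/τ)f(t_m) ) ] dt. Then there exists a constant C' depending only on α, T, C, and sup_{[0,T]}|f'|, but not on τ or 𝒩, such that τ·∑_{m=1}^{n} |(R1)^m| ≤ C'·τ² for every 1 ≤ n ≤ 𝒩. -/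
open MeasureTheory

lemma mvt_rpow {α : ℝ} (hα0 : 0 < α) (hα1 : α < 1) (N : ℕ) :
    α * ((N : ℝ) + 1) ^ (α - 1) ≤ ((N : ℝ) + 1) ^ α - (N : ℝ) ^ α := by
  set x : ℝ := (N : ℝ) with hx
  have hx0 : (0:ℝ) ≤ x := Nat.cast_nonneg N
  have hcont : ContinuousOn (fun y : ℝ => y ^ α) (Set.Icc x (x + 1)) := fun y _ =>
    (Real.continuousAt_rpow_const y α (Or.inr hα0.le)).continuousWithinAt
  have hderiv : ∀ y ∈ Set.Ioo x (x + 1),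
      HasDerivAt (fun y : ℝ => y ^ α) (α * y ^ (α - 1)) y := fun y hy =>
    Real.hasDerivAt_rpow_const (Or.inl (by nlinarith [hy.1] : y ≠ 0))
  obtain ⟨c, hc, hceq⟩ := exists_hasDerivAt_eq_slope (fun y : ℝ => y ^ α)
    (fun y => α * y ^ (α - 1)) (by linarith : x < x + 1) hcont hderiv
  have hc0 : 0 < c := lt_of_le_of_lt hx0 hc.1
  have hmono : (x + 1) ^ (α - 1) ≤ c ^ (α - 1) :=
    Real.rpow_le_rpow_of_nonpos hc0 hc.2.le (by linarith)
  have : α * c ^ (α - 1) = (x + 1) ^ α - x ^ α := by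
    rw [hceq]; field_simp; ring
  nlinarith [hmono, this]

lemma sum_rpow_bound {α : ℝ} (hα0 : 0 < α) (hα1 : α < 1) (N : ℕ) :
    ∑ k ∈ Finset.Icc 1 N, ((k : ℝ)) ^ (α - 1) ≤ (N : ℝ) ^ α / α := by
  induction N with
  | zero => simp [Real.zero_rpow (ne_of_gt hα0)]
  | succ n ih =>
      rw [show Finset.Icc 1 (n+1) = insert (n+1) (Finset.Icc 1 n) by
        ext m; simp [Finset.mem_Icc, Finset.mem_insert]; omega]
      rw [Finset.sum_insert (by simp)]
      have h := mvt_rpow hα0 hα1 n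
      have hcast : ((n+1 : ℕ) : ℝ) = (n : ℝ) + 1 := by push_cast; ring
      rw [hcast]
      have : ((n:ℝ)+1) ^ (α-1) ≤ (((n:ℝ)+1)^α - (n:ℝ)^α)/α := by
        rw [le_div_iff₀ hα0]; linarith [h]
      have heq : ((n:ℝ)+1)^α/α = (n:ℝ)^α/α + (((n:ℝ)+1)^α - (n:ℝ)^α)/α := by ring
      linarith [ih, this]

lemma trapezoid_est {T : ℝ} {f f' f'' : ℝ → ℝ}
    (hf : ∀ t ∈ Set.Icc (0 : ℝ) T, HasDerivWithinAt f (f' t) (Set.Icc (0 : ℝ) T) t)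
    (hf'c : ContinuousOn f' (Set.Icc (0 : ℝ) T))
    (hf' : ∀ t ∈ Set.Ioc (0 : ℝ) T, HasDerivWithinAt f' (f'' t) (Set.Ioc (0 : ℝ) T) t)
    (hf''c : ContinuousOn f'' (Set.Ioc (0 : ℝ) T))
    {a b K : ℝ} (ha : 0 < a) (hab : a < b) (hbT : b ≤ T)
    (hK : ∀ t ∈ Set.Icc a b, |f'' t| ≤ K) :
    |(∫ t in a..b, f t) - (b - a) * (f a + f b) / 2| ≤ K * (b - a) ^ 3 / 8 := by
  have hsub : Set.Icc a b ⊆ Set.Icc (0 : ℝ) T := fun t ht =>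
    ⟨le_trans ha.le ht.1, le_trans ht.2 hbT⟩
  have hsub' : Set.Icc a b ⊆ Set.Ioc (0 : ℝ) T := fun t ht =>
    ⟨lt_of_lt_of_le ha ht.1, le_trans ht.2 hbT⟩
  have hfc : ContinuousOn f (Set.Icc (0 : ℝ) T) := fun t ht =>
    (hf t ht).continuousWithinAt
  set G : ℝ → ℝ := fun t => (t - a) * (b - t) * f' t - (a + b - 2 * t) * f t with hG
  set g' : ℝ → ℝ := fun t => (t - a) * (b - t) * f'' t + 2 * f t with hg'
  have hGderiv : ∀ x ∈ Set.Ioo a b, HasDerivWithinAt G (g' x) (Set.Ioi x) x := by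
    intro x hx
    have hx0 : 0 < x := lt_trans ha hx.1
    have hxT : x < T := lt_of_lt_of_le hx.2 hbT
    have hfx : HasDerivAt f (f' x) x :=
      (hf x ⟨hx0.le, hxT.le⟩).hasDerivAt (Icc_mem_nhds hx0 hxT)
    have hf'x : HasDerivAt f' (f'' x) x :=
      (hf' x ⟨hx0, hxT.le⟩).hasDerivAt (Ioc_mem_nhds hx0 hxT)
    have h1 : HasDerivAt (fun t : ℝ => (t - a) * (b - t)) (a + b - 2 * x) x := by
      have := ((hasDerivAt_id x).sub_const a).mul ((hasDerivAt_const x b).sub (hasDerivAt_id x))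
      exact this.congr_deriv (by simp only [Pi.sub_apply, id]; ring)
    have h2 : HasDerivAt (fun t : ℝ => a + b - 2 * t) (-2) x := by
      have := (hasDerivAt_const x (a + b)).sub ((hasDerivAt_id x).const_mul 2)
      exact this.congr_deriv (by norm_num)
    have : HasDerivAt G ((a + b - 2*x) * f' x + (x - a)*(b - x) * f'' x
        - ((-2) * f x + (a + b - 2*x) * f' x)) x :=
      (h1.mul hf'x).sub (h2.mul hfx)
    have hfinal : HasDerivAt G (g' x) x := by convert this using 1; simp [hg']; ring
    exact hfinal.hasDerivWithinAt
  have hGcont : ContinuousOn G (Set.Icc a b) := by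
    apply ContinuousOn.sub
    · exact (Continuous.continuousOn (by continuity)).mul (hf'c.mono hsub)
    · exact (Continuous.continuousOn (by continuity)).mul (hfc.mono hsub)
  have hwc : Continuous (fun t : ℝ => (t - a) * (b - t)) := by continuity
  have hg'cont : ContinuousOn g' (Set.Icc a b) :=
    (hwc.continuousOn.mul (hf''c.mono hsub')).add
      ((continuous_const.continuousOn).mul (hfc.mono hsub))
  have hg'int : IntervalIntegrable g' volume a b := by
    apply ContinuousOn.intervalIntegrable
    rwa [Set.uIcc_of_le hab.le]
  have hftc : (∫ t in a..b, g' t) = G b - G a :=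
    intervalIntegral.integral_eq_sub_of_hasDeriv_right_of_le hab.le hGcont hGderiv hg'int
  have hGb : G b - G a = (b - a) * (f a + f b) := by simp [hG]; ring
  have hwint : IntervalIntegrable (fun t => (t - a) * (b - t) * f'' t) volume a b := by
    apply ContinuousOn.intervalIntegrable
    rw [Set.uIcc_of_le hab.le]
    exact hwc.continuousOn.mul (hf''c.mono hsub')
  have hfint : IntervalIntegrable f volume a b := by
    apply ContinuousOn.intervalIntegrable
    rw [Set.uIcc_of_le hab.le]
    exact hfc.mono hsub
  have hsplit : (∫ t in a..b, g' t)
      = (∫ t in a..b, (t - a) * (b - t) * f'' t) + 2 * ∫ t in a..b, f t := by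
    rw [hg']
    rw [intervalIntegral.integral_add hwint (hfint.const_mul 2),
      intervalIntegral.integral_const_mul]
  have hK0 : 0 ≤ K := le_trans (abs_nonneg _) (hK a ⟨le_refl a, hab.le⟩)
  have hwbound : ∀ t ∈ Set.uIoc a b, ‖(t - a) * (b - t) * f'' t‖ ≤ (b-a)^2/4 * K := by
    intro t ht
    rw [Set.uIoc_of_le hab.le] at ht
    have ht' : t ∈ Set.Icc a b := ⟨ht.1.le, ht.2⟩
    have h1 : 0 ≤ (t - a) * (b - t) := mul_nonneg (by linarith [ht'.1]) (by linarith [ht'.2])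
    have h2 : (t - a) * (b - t) ≤ (b-a)^2/4 := by nlinarith [sq_nonneg ((t-a)-(b-t))]
    rw [Real.norm_eq_abs, abs_mul, abs_of_nonneg h1]
    exact mul_le_mul h2 (hK t ht') (abs_nonneg _) (by positivity)
  have hwest : |∫ t in a..b, (t - a) * (b - t) * f'' t| ≤ (b-a)^2/4 * K * |b - a| := by
    have := intervalIntegral.norm_integral_le_of_norm_le_const hwbound
    simpa using this
  rw [abs_of_pos (by linarith : (0:ℝ) < b - a)] at hwest
  have hkey : (∫ t in a..b, f t) - (b - a) * (f a + f b) / 2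
      = -(1/2) * ∫ t in a..b, (t - a) * (b - t) * f'' t := by
    have := hftc
    rw [hsplit, hGb] at this
    linarith [this]
  rw [hkey, abs_mul]
  rw [show |(-(1/2) : ℝ)| = 1/2 by norm_num]
  nlinarith [hwest, abs_nonneg (∫ t in a..b, (t - a) * (b - t) * f'' t)]

lemma intervalIntegral_integral_id (a b : ℝ) : ∫ x in a..b, x = (b ^ 2 - a ^ 2) / 2 :=
  integral_id

lemma integral_linear (a b c d : ℝ) :
    (∫ t in a..b, (c * t + d)) = c * (b^2 - a^2)/2 + d * (b - a) := by
  rw [intervalIntegral.integral_add ((intervalIntegral.intervalIntegrable_id).const_mul c)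
    (intervalIntegrable_const), intervalIntegral.integral_const_mul,
    intervalIntegral_integral_id, intervalIntegral.integral_const]
  simp [smul_eq_mul]; ring

lemma interp_integral (a b τ A B : ℝ) (hτ : τ ≠ 0) (hba : b - a = τ) :
    (∫ t in a..b, ((b - t)/τ * A + (t - a)/τ * B)) = (b - a) * (A + B) / 2 := by
  have heq : Set.EqOn (fun t : ℝ => (b - t)/τ * A + (t - a)/τ * B)
      (fun t : ℝ => ((B - A)/τ) * t + (b * A - a * B)/τ) (Set.uIcc a b) := fun t _ => by
    simp only; ring
  rw [intervalIntegral.integral_congr heq, integral_linear, ← hba]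
  have h : b - a ≠ 0 := by rw [hba]; exact hτ
  field_simp
  ring

/-- Lemma 2.3 (pointwise/scalar form): the accumulated Crank–Nicolson time-averaging
truncation errors are of second order, τ·∑_{m=1}^n |(R1)^m| ≤ C'·τ². -/
theorem accumulated_cn_truncation_error
    (α T C : ℝ) (hα0 : 0 < α) (hα1 : α < 1) (hT : 0 < T) (hC : 0 < C)
    (f f' f'' : ℝ → ℝ)
    (hf : ∀ t ∈ Set.Icc (0 : ℝ) T, HasDerivWithinAt f (f' t) (Set.Icc (0 : ℝ) T) t)
    (hf'c : ContinuousOn f' (Set.Icc (0 : ℝ) T))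
    (hf' : ∀ t ∈ Set.Ioc (0 : ℝ) T, HasDerivWithinAt f' (f'' t) (Set.Ioc (0 : ℝ) T) t)
    (hf''c : ContinuousOn f'' (Set.Ioc (0 : ℝ) T))
    (hbound : ∀ t ∈ Set.Ioc (0 : ℝ) T, |f'' t| ≤ C * t ^ (α - 1)) :
    ∃ C' > 0, ∀ 𝒩 : ℕ, 0 < 𝒩 →
      let τ : ℝ := T / (𝒩 : ℝ)
      let R1 : ℕ → ℝ := fun m =>
        if m = 1 then (1 / τ) * ∫ t in (0 : ℝ)..τ, (f t - f τ)
        else (1 / τ) * ∫ t in (((m : ℝ) - 1) * τ)..((m : ℝ) * τ),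
          (f t - ((((m : ℝ) * τ - t) / τ) * f (((m : ℝ) - 1) * τ)
            + ((t - ((m : ℝ) - 1) * τ) / τ) * f ((m : ℝ) * τ)))
      ∀ n : ℕ, 1 ≤ n → n ≤ 𝒩 →
        τ * ∑ m ∈ Finset.Icc 1 n, |R1 m| ≤ C' * τ ^ 2 := by
  obtain ⟨M, hM⟩ := isCompact_Icc.exists_bound_of_continuousOn hf'c
  have hM0 : 0 ≤ M := le_trans (norm_nonneg _) (hM 0 ⟨le_refl 0, hT.le⟩)
  have hTα : 0 < T ^ α := Real.rpow_pos_of_pos hT α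
  refine ⟨M + C * T ^ α / (8 * α) + 1, by positivity, ?_⟩
  intro 𝒩 h𝒩 τ R1 n hn1 hnN
  have hfc : ContinuousOn f (Set.Icc (0 : ℝ) T) := fun t ht => (hf t ht).continuousWithinAt
  have hNpos : (0:ℝ) < (𝒩 : ℝ) := Nat.cast_pos.mpr h𝒩
  have hτ : 0 < τ := div_pos hT hNpos
  have hτT : ∀ m : ℕ, m ≤ 𝒩 → (m : ℝ) * τ ≤ T := by
    intro m hm
    have hmc : (m : ℝ) ≤ (𝒩 : ℝ) := Nat.cast_le.mpr hm
    calc (m : ℝ) * τ ≤ (𝒩 : ℝ) * τ := mul_le_mul_of_nonneg_right hmc hτ.le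
      _ = T := by rw [show τ = T/(𝒩:ℝ) from rfl]; field_simp
  -- bound for m = 1
  have hbound1 : |R1 1| ≤ M * τ := by
    have hτT' : τ ≤ T := by have := hτT 1 h𝒩; simpa using this
    have hlip : ∀ t ∈ Set.uIoc (0:ℝ) τ, ‖f t - f τ‖ ≤ M * τ := by
      intro t ht
      rw [Set.uIoc_of_le hτ.le] at ht
      have htm : t ∈ Set.Icc (0:ℝ) T := ⟨ht.1.le, le_trans ht.2 hτT'⟩
      have hτm : τ ∈ Set.Icc (0:ℝ) T := ⟨hτ.le, hτT'⟩
      calc ‖f t - f τ‖ ≤ M * ‖t - τ‖ :=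
            Convex.norm_image_sub_le_of_norm_hasDerivWithin_le hf hM (convex_Icc _ _) hτm htm
        _ ≤ M * τ := by
            rw [Real.norm_eq_abs]
            exact mul_le_mul_of_nonneg_left
              (abs_le.mpr ⟨by linarith [ht.1], by linarith [ht.2]⟩) hM0
    have hint := intervalIntegral.norm_integral_le_of_norm_le_const hlip
    simp only [R1, if_pos rfl]
    rw [abs_mul, abs_of_pos (by positivity : (0:ℝ) < 1/τ)]
    rw [Real.norm_eq_abs] at hint
    have : |∫ t in (0:ℝ)..τ, (f t - f τ)| ≤ M * τ * τ := by
      calc |∫ t in (0:ℝ)..τ, (f t - f τ)| ≤ M * τ * |τ - 0| := hint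
        _ = M * τ * τ := by rw [sub_zero, abs_of_pos hτ]
    calc (1/τ) * |∫ t in (0:ℝ)..τ, (f t - f τ)| ≤ (1/τ) * (M * τ * τ) :=
          mul_le_mul_of_nonneg_left this (by positivity)
      _ = M * τ := by
          rw [show (1:ℝ)/τ * (M * τ * τ) = M * τ * (τ/τ) by ring, div_self hτ.ne', mul_one]
  -- bound for m ≥ 2
  have hbound2 : ∀ m : ℕ, 2 ≤ m → m ≤ 𝒩 →
      |R1 m| ≤ C/8 * ((((m:ℝ) - 1) * τ) ^ (α - 1)) * τ ^ 2 := by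
    intro m hm2 hmN
    set a : ℝ := ((m:ℝ) - 1) * τ with hadef
    set b : ℝ := (m:ℝ) * τ with hbdef
    have hmc : (2:ℝ) ≤ (m:ℝ) := by exact_mod_cast hm2
    have ha : 0 < a := mul_pos (by linarith) hτ
    have hba : b - a = τ := by rw [hadef, hbdef]; ring
    have hab : a < b := by linarith
    have hbT : b ≤ T := hτT m hmN
    have hKb : ∀ t ∈ Set.Icc a b, |f'' t| ≤ C * a ^ (α - 1) := by
      intro t ht
      have ht0 : 0 < t := lt_of_lt_of_le ha ht.1
      have htT : t ≤ T := le_trans ht.2 hbT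
      calc |f'' t| ≤ C * t ^ (α - 1) := hbound t ⟨ht0, htT⟩
        _ ≤ C * a ^ (α - 1) := mul_le_mul_of_nonneg_left
            (Real.rpow_le_rpow_of_nonpos ha ht.1 (by linarith)) hC.le
    have htrap := trapezoid_est hf hf'c hf' hf''c ha hab hbT hKb
    have hm1 : m ≠ 1 := by omega
    have hR1m : R1 m = (1/τ) * ∫ t in a..b,
        (f t - ((b - t)/τ * f a + (t - a)/τ * f b)) := by
      simp only [R1, if_neg hm1]
      rfl
    have hfint : IntervalIntegrable f volume a b := by
      apply ContinuousOn.intervalIntegrable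
      rw [Set.uIcc_of_le hab.le]
      exact hfc.mono (fun t ht => ⟨le_trans ha.le ht.1, le_trans ht.2 hbT⟩)
    have hpc : Continuous (fun t : ℝ => (b - t)/τ * f a + (t - a)/τ * f b) := by fun_prop
    have hsplit : (∫ t in a..b, (f t - ((b - t)/τ * f a + (t - a)/τ * f b)))
        = (∫ t in a..b, f t) - ∫ t in a..b, ((b - t)/τ * f a + (t - a)/τ * f b) :=
      intervalIntegral.integral_sub hfint (hpc.intervalIntegrable a b)
    have hlin : (∫ t in a..b, ((b - t)/τ * f a + (t - a)/τ * f b))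
        = (b - a) * (f a + f b) / 2 := interp_integral a b τ (f a) (f b) hτ.ne' hba
    have hK0 : 0 ≤ C * a ^ (α - 1) := by positivity
    rw [hR1m, hsplit, hlin, abs_mul, abs_of_pos (by positivity : (0:ℝ) < 1/τ)]
    calc (1/τ) * |(∫ t in a..b, f t) - (b - a) * (f a + f b) / 2|
        ≤ (1/τ) * (C * a ^ (α - 1) * (b - a)^3 / 8) :=
          mul_le_mul_of_nonneg_left htrap (by positivity)
      _ = C/8 * (a ^ (α - 1)) * τ ^ 2 := by
          rw [hba, show (1:ℝ)/τ * (C * a ^ (α - 1) * τ ^ 3 / 8)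
            = C/8 * (a ^ (α - 1)) * τ ^ 2 * (τ/τ) by ring, div_self hτ.ne', mul_one]
  -- assemble the sum
  have hIcc : Finset.Icc 1 n = insert 1 (Finset.Icc 2 n) := by
    ext m; simp only [Finset.mem_Icc, Finset.mem_insert]; omega
  have hsum1 : ∑ m ∈ Finset.Icc 1 n, |R1 m|
      ≤ M * τ + ∑ m ∈ Finset.Icc 2 n, C/8 * ((((m:ℝ) - 1) * τ) ^ (α - 1)) * τ ^ 2 := by
    rw [hIcc, Finset.sum_insert (by simp)]
    exact add_le_add hbound1 (Finset.sum_le_sum fun m hm => by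
      have := Finset.mem_Icc.mp hm
      exact hbound2 m this.1 (le_trans this.2 hnN))
  -- reindex and bound the tail sum
  set S : ℝ := ∑ k ∈ Finset.Icc 1 (n-1), ((k:ℝ)) ^ (α - 1) with hSdef
  have htail : ∑ m ∈ Finset.Icc 2 n, C/8 * ((((m:ℝ) - 1) * τ) ^ (α - 1)) * τ ^ 2
      = C/8 * τ^2 * τ ^ (α - 1) * S := by
    have hmap : Finset.Icc 2 n
        = Finset.map ⟨fun k => k + 1, add_left_injective 1⟩ (Finset.Icc 1 (n-1)) := by
      ext m
      simp only [Finset.mem_map, Finset.mem_Icc, Function.Embedding.coeFn_mk]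
      constructor
      · rintro ⟨h2, hn⟩; exact ⟨m - 1, by omega, by omega⟩
      · rintro ⟨k, hk, rfl⟩; omega
    rw [hmap, Finset.sum_map, hSdef, Finset.mul_sum]
    apply Finset.sum_congr rfl
    intro k hk
    have hk1 : 1 ≤ k := (Finset.mem_Icc.mp hk).1
    have hc1 : ((k + 1 : ℕ) : ℝ) - 1 = (k : ℝ) := by push_cast; ring
    simp only [Function.Embedding.coeFn_mk, hc1]
    rw [Real.mul_rpow (Nat.cast_nonneg k) hτ.le]
    ring
  have hS0 : 0 ≤ S := Finset.sum_nonneg fun k _ => Real.rpow_nonneg (Nat.cast_nonneg k) _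
  have hSb : S ≤ ((n-1 : ℕ) : ℝ) ^ α / α := sum_rpow_bound hα0 hα1 (n-1)
  -- rpow algebra
  have hτα : τ ^ (α - 1) * τ = τ ^ α := by
    rw [← Real.rpow_add_one hτ.ne' (α - 1)]
    norm_num
  have hnτ : ((n-1 : ℕ) : ℝ) * τ ≤ T := hτT (n-1) (le_trans (Nat.sub_le n 1) hnN)
  have hrw : τ ^ α * ((n-1 : ℕ) : ℝ) ^ α ≤ T ^ α := by
    rw [← Real.mul_rpow hτ.le (Nat.cast_nonneg _)]
    exact Real.rpow_le_rpow (by positivity) (by linarith [hnτ, mul_comm τ ((n-1:ℕ):ℝ)]) hα0.le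
  have hτα0 : 0 < τ ^ (α - 1) := Real.rpow_pos_of_pos hτ _
  have hτα0' : 0 < τ ^ α := Real.rpow_pos_of_pos hτ _
  -- final chain
  calc τ * ∑ m ∈ Finset.Icc 1 n, |R1 m|
      ≤ τ * (M * τ + C/8 * τ^2 * τ ^ (α - 1) * S) := by
        rw [← htail]; exact mul_le_mul_of_nonneg_left hsum1 hτ.le
    _ = M * τ^2 + C/8 * τ^2 * (τ ^ (α - 1) * τ) * S := by ring
    _ = M * τ^2 + C/8 * τ^2 * τ ^ α * S := by rw [hτα]
    _ ≤ M * τ^2 + C/8 * τ^2 * τ ^ α * (((n-1 : ℕ) : ℝ) ^ α / α) := by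
        have : 0 ≤ C/8 * τ^2 * τ ^ α := by positivity
        nlinarith [hSb, this]
    _ = M * τ^2 + C/(8*α) * τ^2 * (τ ^ α * ((n-1 : ℕ) : ℝ) ^ α) := by
        field_simp
    _ ≤ M * τ^2 + C/(8*α) * τ^2 * T ^ α := by
        have h1 : 0 ≤ C/(8*α) * τ^2 := by positivity
        nlinarith [hrw, h1]
    _ ≤ (M + C * T ^ α / (8 * α) + 1) * τ ^ 2 := by
        have hx : C/(8*α) * τ^2 * T^α = C * T^α/(8*α) * τ^2 := by ring
        have hexp : (M + C * T ^ α / (8 * α) + 1) * τ ^ 2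
            = M*τ^2 + C*T^α/(8*α)*τ^2 + τ^2 := by ring
        rw [hexp]
        nlinarith [sq_nonneg τ, hx]
end
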